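/- Let M ≥ 1, let x¹, …, xᴹ ∈ ℝⁿ, let w ∈ ℝⁿ with w ≠ 0, and let b ∈ ℝ. Suppose max_{1≤i≤M} ‖xⁱ‖ ≤ max_{1≤i≤M} |⟨w, xⁱ⟩ + b| / ‖w‖. Then the radius–margin product satisfies the convex bound (max_{1≤i≤M} ‖xⁱ‖)·‖w‖ ≤ Σ_{i=1}^{M} (⟨w, xⁱ⟩ + b)² / ‖w‖₂² + ‖w‖₂². -/
import Mathlib


open scoped RealInnerProductSpace

/-- If the maximum distance of a sample to the hyperplane dominates the
radius of the data, then the radius–norm product is bounded by the convex,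
differentiable bound: the sum of squared scores over the squared norm plus
the squared norm. -/
theorem radius_margin_sum_bound
    (n M : ℕ) (hM : 0 < M)
    (x : Fin M → EuclideanSpace ℝ (Fin n))
    (w : EuclideanSpace ℝ (Fin n)) (hw : w ≠ 0) (b : ℝ)
    (hdom : (Finset.univ.sup' ⟨⟨0, hM⟩, Finset.mem_univ _⟩
        (fun i : Fin M => ‖x i‖)) ≤
      Finset.univ.sup' ⟨⟨0, hM⟩, Finset.mem_univ _⟩
        (fun i : Fin M => |⟪w, x i⟫ + b| / ‖w‖)) :
    (Finset.univ.sup' ⟨⟨0, hM⟩, Finset.mem_univ _⟩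
        (fun i : Fin M => ‖x i‖)) * ‖w‖ ≤
      (∑ i : Fin M, (⟪w, x i⟫ + b) ^ 2 / ‖w‖ ^ 2) + ‖w‖ ^ 2 := by
  have hwpos : (0:ℝ) < ‖w‖ := norm_pos_iff.mpr hw
  set ne : (Finset.univ : Finset (Fin M)).Nonempty :=
    ⟨⟨0, hM⟩, Finset.mem_univ _⟩
  obtain ⟨j, -, hj⟩ := Finset.exists_mem_eq_sup' ne
      (fun i : Fin M => |⟪w, x i⟫ + b| / ‖w‖)
  set a : ℝ := |⟪w, x j⟫ + b| with ha
  have hanonneg : 0 ≤ a := abs_nonneg _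
  have h1 : (Finset.univ.sup' ne (fun i : Fin M => ‖x i‖)) * ‖w‖ ≤ a := by
    calc (Finset.univ.sup' ne (fun i : Fin M => ‖x i‖)) * ‖w‖
        ≤ (a / ‖w‖) * ‖w‖ := by
          exact mul_le_mul_of_nonneg_right (hdom.trans hj.le) hwpos.le
      _ = a := div_mul_cancel₀ a hwpos.ne'
  have h2 : a ≤ a ^ 2 / ‖w‖ ^ 2 + ‖w‖ ^ 2 := by
    have hsq : (0:ℝ) < ‖w‖ ^ 2 := by positivity
    rw [div_add' _ _ _ hsq.ne', le_div_iff₀ hsq]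
    nlinarith [sq_nonneg (a - ‖w‖ ^ 2), sq_nonneg (‖w‖ ^ 2 - 1), sq_nonneg a]
  have h3 : a ^ 2 / ‖w‖ ^ 2 ≤ ∑ i : Fin M, (⟪w, x i⟫ + b) ^ 2 / ‖w‖ ^ 2 := by
    have := Finset.single_le_sum
      (f := fun i : Fin M => (⟪w, x i⟫ + b) ^ 2 / ‖w‖ ^ 2)
      (fun i _ => by positivity) (Finset.mem_univ j)
    simpa [ha, sq_abs] using this
  linarith
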